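/- Let 𝔽 be a field and c ≥ 2. Let L be the free c-nilpotent Lie algebra over 𝔽 on the generating set {b_X : X ⊆ ℕ^{c−1}} ∪ {a_{i,j} : 0 ≤ i ≤ c−2, j ∈ ℕ}, i.e., the quotient of the free Lie algebra on these generators by the (c+1)-st term of its lower central series. Let I be the 𝔽-linear span in L of the set of left-normed brackets {⁅b_X, a_{0,j₀}, a_{1,j₁}, …, a_{c−2,j_{c−2}}⁆ : X ⊆ ℕ^{c−1} and (j₀,…,j_{c−2}) ∈ X}. Then I is a Lie ideal of L, and for every X ⊆ ℕ^{c−1} and every (j₀,…,j_{c−2}) ∈ ℕ^{c−1}, the element ⁅b_X, a_{0,j₀}, …, a_{c−2,j_{c−2}}⁆ lies in I if and only if (j₀,…,j_{c−2}) ∈ X. -/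

import Mathlib

universe u
universe v

/-- The free `c`-nilpotent Lie algebra over `𝔽` on a set `S`: the quotient of the free Lie
algebra on `S` by the `(c+1)`-st term of its lower central series (which is
`lowerCentralSeries 𝔽 _ _ c` in Mathlib's 0-based indexing). -/
abbrev FreeNilpotentLieAlgebra (𝔽 : Type u) [Field 𝔽] (c : ℕ) (S : Type u) :=
  FreeLieAlgebra 𝔽 S ⧸
    LieModule.lowerCentralSeries 𝔽 (FreeLieAlgebra 𝔽 S) (FreeLieAlgebra 𝔽 S) c

/-- Left-normed iterated bracket: `leftBracket x [y₁, …, yₙ] = ⁅…⁅⁅x, y₁⁆, y₂⁆, …, yₙ⁆`. -/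
def leftBracket {L : Type u} [LieRing L] : L → List L → L
  | x, [] => x
  | x, y :: ys => leftBracket ⁅x, y⁆ ys

/-- Indexing type for the generators `b_X` (for `X ⊆ ℕ^{c-1}`) and `a_{i,j}`
(for `0 ≤ i ≤ c-2`, `j ∈ ℕ`). -/
abbrev GenIdx (c : ℕ) : Type :=
  Set (Fin (c - 1) → ℕ) ⊕ (Fin (c - 1) × ℕ)

/-! ### Auxiliary lemmas -/

attribute [local instance 100] LieRing.ofAssociativeRing
open Fin.NatCast

lemma leftBracket_nil {L : Type u} [LieRing L] (x : L) : leftBracket x [] = x := rfl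

lemma leftBracket_cons {L : Type u} [LieRing L] (x y : L) (l : List L) :
    leftBracket x (y :: l) = leftBracket ⁅x, y⁆ l := rfl

lemma leftBracket_zero {L : Type u} [LieRing L] (l : List L) : leftBracket (0 : L) l = 0 := by
  induction l with
  | nil => rfl
  | cons y ys ih => rw [leftBracket_cons, zero_lie]; exact ih

lemma leftBracket_of_zero_mem {L : Type u} [LieRing L] {l : List L} (h : (0 : L) ∈ l) (x : L) :
    leftBracket x l = 0 := by
  induction l generalizing x with
  | nil => simp at h
  | cons y ys ih =>
    rcases List.mem_cons.mp h with h' | h'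
    · rw [leftBracket_cons, ← h', lie_zero]
      exact leftBracket_zero ys
    · exact ih h' _

lemma map_leftBracket {L : Type u} {M : Type v} [LieRing L] [LieRing M] (f : L → M)
    (hf : ∀ a b, f ⁅a, b⁆ = ⁅f a, f b⁆) (l : List L) (x : L) :
    f (leftBracket x l) = leftBracket (f x) (l.map f) := by
  induction l generalizing x with
  | nil => rfl
  | cons y ys ih => rw [List.map_cons, leftBracket_cons, leftBracket_cons, ih, hf]

lemma leftBracket_mem_lcs {R : Type} [CommRing R] {L : Type} [LieRing L] [LieAlgebra R L]
    (l : List L) : ∀ (k : ℕ) (x : L), x ∈ LieModule.lowerCentralSeries R L L k →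
    leftBracket x l ∈ LieModule.lowerCentralSeries R L L (k + l.length) := by
  induction l with
  | nil => intro k x hx; simpa [leftBracket_nil] using hx
  | cons y ys ih =>
    intro k x hx
    rw [leftBracket_cons, List.length_cons,
      show k + (ys.length + 1) = (k + 1) + ys.length from by omega]
    apply ih
    rw [LieModule.lowerCentralSeries_succ]
    have h := LieSubmodule.lie_mem_lie (LieSubmodule.mem_top y) hx
    rw [← lie_skew]
    exact neg_mem h

lemma lcs_succ_of_pos {R : Type} [CommRing R] {L : Type} [LieRing L] [LieAlgebra R L]
    (c : ℕ) (hc : 1 ≤ c) :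
    LieModule.lowerCentralSeries R L L c =
      ⁅(⊤ : LieIdeal R L), LieModule.lowerCentralSeries R L L (c - 1)⁆ := by
  obtain ⟨k, rfl⟩ : ∃ k, c = k + 1 := ⟨c - 1, by omega⟩
  simp [LieModule.lowerCentralSeries_succ]

/-- strictly-upper-triangular-type submodules of matrices -/
def Smod (𝔽 : Type) [Field 𝔽] (n k : ℕ) : Submodule 𝔽 (Matrix (Fin (n+1)) (Fin (n+1)) 𝔽) where
  carrier := {A | ∀ i j : Fin (n+1), (j : ℕ) < (i : ℕ) + k + 1 → A i j = 0}
  add_mem' := by intro A B hA hB i j h; simp [hA i j h, hB i j h]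
  zero_mem' := by intro i j h; simp
  smul_mem' := by intro t A hA i j h; simp [hA i j h]

lemma mul_mem_Smod {𝔽 : Type} [Field 𝔽] {n a b : ℕ}
    {A B : Matrix (Fin (n+1)) (Fin (n+1)) 𝔽}
    (hA : A ∈ Smod 𝔽 n a) (hB : B ∈ Smod 𝔽 n b) : A * B ∈ Smod 𝔽 n (a + b + 1) := by
  intro i j h
  rw [Matrix.mul_apply]
  apply Finset.sum_eq_zero
  intro k _
  by_cases hk : (k : ℕ) < (i : ℕ) + a + 1
  · rw [hA i k hk, zero_mul]
  · rw [hB k j (by omega), mul_zero]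

lemma lie_mem_Smod {𝔽 : Type} [Field 𝔽] {n b : ℕ}
    {A B : Matrix (Fin (n+1)) (Fin (n+1)) 𝔽}
    (hA : A ∈ Smod 𝔽 n 0) (hB : B ∈ Smod 𝔽 n b) : ⁅A, B⁆ ∈ Smod 𝔽 n (b + 1) := by
  rw [Ring.lie_def]
  have h1 := mul_mem_Smod hA hB
  have h2 := mul_mem_Smod hB hA
  exact sub_mem (by simpa using h1) (by simpa using h2)

lemma Smod_eq_zero {𝔽 : Type} [Field 𝔽] {n : ℕ} {A : Matrix (Fin (n+1)) (Fin (n+1)) 𝔽}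
    (h : A ∈ Smod 𝔽 n n) : A = 0 := by
  ext i j
  rw [Matrix.zero_apply]
  exact h i j (by omega)

/-- strictly upper triangular matrices as a Lie subalgebra -/
def strictUpper (𝔽 : Type) [Field 𝔽] (n : ℕ) :
    LieSubalgebra 𝔽 (Matrix (Fin (n+1)) (Fin (n+1)) 𝔽) :=
  { Smod 𝔽 n 0 with
    lie_mem' := fun {A B} hA hB => by
      have h := lie_mem_Smod (hA : A ∈ Smod 𝔽 n 0) (hB : B ∈ Smod 𝔽 n 0)
      exact fun i j hj => h i j (by omega) }

lemma lcs_map_mem {𝔽 : Type} [Field 𝔽] {n : ℕ} {L' : Type} [LieRing L'] [LieAlgebra 𝔽 L']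
    (φ : L' →ₗ⁅𝔽⁆ Matrix (Fin (n+1)) (Fin (n+1)) 𝔽) (h0 : ∀ x, φ x ∈ Smod 𝔽 n 0) :
    ∀ (k : ℕ) (x : L'), x ∈ LieModule.lowerCentralSeries 𝔽 L' L' k → φ x ∈ Smod 𝔽 n k := by
  intro k
  induction k with
  | zero => intro x _; exact h0 x
  | succ k ih =>
    intro x hx
    rw [LieModule.lowerCentralSeries_succ, ← LieSubmodule.mem_toSubmodule,
      LieSubmodule.lieIdeal_oper_eq_linear_span'] at hx
    refine Submodule.span_induction (p := fun z _ => φ z ∈ Smod 𝔽 n (k + 1)) ?_ ?_ ?_ ?_ hx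
    · rintro z ⟨y, -, u, hu, rfl⟩
      rw [LieHom.map_lie]
      exact lie_mem_Smod (h0 y) (ih u hu)
    · simp
    · intro a b _ _ h1 h2; rw [map_add]; exact add_mem h1 h2
    · intro t a _ h1; rw [map_smul]; exact Submodule.smul_mem _ _ h1

/-- elementary matrices by natural number indices -/
def Ee (𝔽 : Type) [Field 𝔽] (n a b : ℕ) : Matrix (Fin (n+1)) (Fin (n+1)) 𝔽 :=
  Matrix.single (a : Fin (n+1)) (b : Fin (n+1)) 1

lemma Ee_mem_Smod {𝔽 : Type} [Field 𝔽] {n k : ℕ} (a b : ℕ) (hb : b ≤ n) (hab : a + k + 1 ≤ b) :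
    Ee 𝔽 n a b ∈ Smod 𝔽 n k := by
  intro i j hj
  apply Matrix.single_apply_of_ne
  rintro ⟨h1, h2⟩
  rw [← h1, ← h2, Fin.val_cast_of_lt (by omega), Fin.val_cast_of_lt (by omega)] at hj
  omega

lemma Ee_bracket {𝔽 : Type} [Field 𝔽] {n : ℕ} (s : ℕ) (hs : 1 ≤ s) (hn : s + 1 ≤ n) :
    ⁅Ee 𝔽 n 0 s, Ee 𝔽 n s (s+1)⁆ = Ee 𝔽 n 0 (s+1) := by
  have hne : ((s+1 : ℕ) : Fin (n+1)) ≠ ((0 : ℕ) : Fin (n+1)) := by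
    intro h
    have := congrArg Fin.val h
    rw [Fin.val_cast_of_lt (by omega), Fin.val_cast_of_lt (by omega)] at this
    omega
  rw [Ring.lie_def]
  unfold Ee
  rw [Matrix.single_mul_single_same, Matrix.single_mul_single_of_ne (h := hne), one_mul,
    sub_zero]

lemma Ee_chain {𝔽 : Type} [Field 𝔽] {n : ℕ} :
    ∀ m s : ℕ, 1 ≤ s → s + m ≤ n →
      leftBracket (Ee 𝔽 n 0 s) (List.ofFn fun i : Fin m => Ee 𝔽 n (s + i) (s + i + 1)) =
        Ee 𝔽 n 0 (s + m) := by
  intro m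
  induction m with
  | zero => intro s hs hn; simp [List.ofFn_zero, leftBracket_nil]
  | succ m ih =>
    intro s hs hn
    rw [List.ofFn_succ]
    simp only [Fin.val_succ, Fin.val_zero, Nat.add_zero]
    rw [leftBracket_cons, Ee_bracket s hs (by omega)]
    have htail : (fun i : Fin m => Ee 𝔽 n (s + ((i : ℕ) + 1)) (s + ((i : ℕ) + 1) + 1)) =
        fun i : Fin m => Ee 𝔽 n ((s+1) + (i : ℕ)) ((s+1) + (i : ℕ) + 1) := by
      funext i
      rw [show s + ((i : ℕ) + 1) = (s + 1) + (i : ℕ) from by omega]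
    rw [htail, ih (s+1) (by omega) (by omega), show (s+1) + m = s + (m+1) from by omega]

open Classical in
/-- The images of the generators in the strictly upper triangular matrices, used to
separate `⁅b_X, a_{0,j₀}, …⁆` from the spanning set. -/
noncomputable def genMat (𝔽 : Type) [Field 𝔽] (c : ℕ) (hc : 2 ≤ c)
    (X : Set (Fin (c - 1) → ℕ)) (jj : Fin (c - 1) → ℕ) : GenIdx c → (strictUpper 𝔽 c)
  | Sum.inl Y => if Y = X then ⟨Ee 𝔽 c 0 1, Ee_mem_Smod 0 1 (by omega) (by omega)⟩ else 0
  | Sum.inr p => if p.2 = jj p.1 then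
      ⟨Ee 𝔽 c ((p.1 : ℕ) + 1) ((p.1 : ℕ) + 2),
        Ee_mem_Smod _ _ (by have := p.1.isLt; omega) (by omega)⟩ else 0

lemma genMat_inl_self {𝔽 : Type} [Field 𝔽] {c : ℕ} (hc : 2 ≤ c)
    (X : Set (Fin (c - 1) → ℕ)) (jj : Fin (c - 1) → ℕ) :
    ((genMat 𝔽 c hc X jj (Sum.inl X) : strictUpper 𝔽 c) : Matrix (Fin (c+1)) (Fin (c+1)) 𝔽) =
      Ee 𝔽 c 0 1 := by
  simp [genMat]

lemma genMat_inl_ne {𝔽 : Type} [Field 𝔽] {c : ℕ} (hc : 2 ≤ c)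
    {X Y : Set (Fin (c - 1) → ℕ)} (jj : Fin (c - 1) → ℕ) (hYX : Y ≠ X) :
    ((genMat 𝔽 c hc X jj (Sum.inl Y) : strictUpper 𝔽 c) : Matrix (Fin (c+1)) (Fin (c+1)) 𝔽) =
      0 := by
  simp [genMat, hYX]

lemma genMat_inr_self {𝔽 : Type} [Field 𝔽] {c : ℕ} (hc : 2 ≤ c)
    (X : Set (Fin (c - 1) → ℕ)) (jj : Fin (c - 1) → ℕ) (i : Fin (c - 1)) :
    ((genMat 𝔽 c hc X jj (Sum.inr (i, jj i)) : strictUpper 𝔽 c) :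
        Matrix (Fin (c+1)) (Fin (c+1)) 𝔽) =
      Ee 𝔽 c ((i : ℕ) + 1) ((i : ℕ) + 2) := by
  simp [genMat]

lemma genMat_inr_ne {𝔽 : Type} [Field 𝔽] {c : ℕ} (hc : 2 ≤ c)
    (X : Set (Fin (c - 1) → ℕ)) (jj : Fin (c - 1) → ℕ) {i : Fin (c - 1)} {k : ℕ}
    (hk : k ≠ jj i) :
    ((genMat 𝔽 c hc X jj (Sum.inr (i, k)) : strictUpper 𝔽 c) :
        Matrix (Fin (c+1)) (Fin (c+1)) 𝔽) =
      0 := by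
  simp [genMat, hk]

noncomputable def φX (𝔽 : Type) [Field 𝔽] (c : ℕ) (hc : 2 ≤ c)
    (X : Set (Fin (c - 1) → ℕ)) (jj : Fin (c - 1) → ℕ) :
    FreeLieAlgebra 𝔽 (GenIdx c) →ₗ⁅𝔽⁆ Matrix (Fin (c+1)) (Fin (c+1)) 𝔽 :=
  (strictUpper 𝔽 c).incl.comp (FreeLieAlgebra.lift 𝔽 (genMat 𝔽 c hc X jj))

lemma φX_of (𝔽 : Type) [Field 𝔽] (c : ℕ) (hc : 2 ≤ c)
    (X : Set (Fin (c - 1) → ℕ)) (jj : Fin (c - 1) → ℕ) (s : GenIdx c) :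
    φX 𝔽 c hc X jj (FreeLieAlgebra.of 𝔽 s) = (genMat 𝔽 c hc X jj s : Matrix _ _ 𝔽) := by
  simp [φX, FreeLieAlgebra.lift_of_apply]

lemma φX_mem (𝔽 : Type) [Field 𝔽] (c : ℕ) (hc : 2 ≤ c)
    (X : Set (Fin (c - 1) → ℕ)) (jj : Fin (c - 1) → ℕ) (x : FreeLieAlgebra 𝔽 (GenIdx c)) :
    φX 𝔽 c hc X jj x ∈ Smod 𝔽 c 0 :=
  ((FreeLieAlgebra.lift 𝔽 (genMat 𝔽 c hc X jj)) x).2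

/-! ### Main theorem -/

/-- In the free `c`-nilpotent Lie algebra `L` on the generators `b_X` (`X ⊆ ℕ^{c-1}`) and
`a_{i,j}`, the span `I` of the left-normed brackets `⁅b_X, a_{0,j₀}, …, a_{c-2,j_{c-2}}⁆`
with `(j₀,…,j_{c-2}) ∈ X` is a Lie ideal of `L`, and
`⁅b_X, a_{0,j₀}, …, a_{c-2,j_{c-2}}⁆ ∈ I` iff `(j₀,…,j_{c-2}) ∈ X`. -/
theorem free_nilpotent_ideal_bracket_mem_iff
    (𝔽 : Type) [Field 𝔽] (c : ℕ) (hc : 2 ≤ c)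
    (bgen : Set (Fin (c - 1) → ℕ) → FreeNilpotentLieAlgebra 𝔽 c (GenIdx c))
    (agen : Fin (c - 1) → ℕ → FreeNilpotentLieAlgebra 𝔽 c (GenIdx c))
    (hb : ∀ X, bgen X = LieSubmodule.Quotient.mk (N := LieModule.lowerCentralSeries 𝔽 _ _ c) (FreeLieAlgebra.of 𝔽 (Sum.inl X)))
    (ha : ∀ i j, agen i j = LieSubmodule.Quotient.mk (N := LieModule.lowerCentralSeries 𝔽 _ _ c) (FreeLieAlgebra.of 𝔽 (Sum.inr (i, j))))
    (e : Set (Fin (c - 1) → ℕ) → (Fin (c - 1) → ℕ) → FreeNilpotentLieAlgebra 𝔽 c (GenIdx c))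
    (he : ∀ X jj, e X jj = leftBracket (bgen X) (List.ofFn fun i => agen i (jj i)))
    (I : Submodule 𝔽 (FreeNilpotentLieAlgebra 𝔽 c (GenIdx c)))
    (hI : I = Submodule.span 𝔽 {z | ∃ X jj, jj ∈ X ∧ z = e X jj}) :
    (∀ (y z : FreeNilpotentLieAlgebra 𝔽 c (GenIdx c)), z ∈ I → ⁅y, z⁆ ∈ I) ∧
    (∀ X jj, e X jj ∈ I ↔ jj ∈ X) := by
  classical
  set L := FreeLieAlgebra 𝔽 (GenIdx c) with hLdef
  set N := LieModule.lowerCentralSeries 𝔽 L L c with hNdef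
  -- `e Y kk` is the image in the quotient of the corresponding left-normed bracket upstairs
  have hmk : ∀ (Y : Set (Fin (c-1) → ℕ)) (kk : Fin (c-1) → ℕ),
      e Y kk = LieSubmodule.Quotient.mk (N := N)
        (leftBracket (FreeLieAlgebra.of 𝔽 (Sum.inl Y))
          (List.ofFn fun i => FreeLieAlgebra.of 𝔽 (Sum.inr (i, kk i)))) := by
    intro Y kk
    rw [he, hb]
    simp only [ha]
    rw [map_leftBracket (LieSubmodule.Quotient.mk (N := N)) (fun a b => rfl), List.map_ofFn]
    rfl
  -- the upstairs bracket lies in the (c-1)-st term of the lower central series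
  have hu_mem : ∀ (Y : Set (Fin (c-1) → ℕ)) (kk : Fin (c-1) → ℕ),
      (leftBracket (FreeLieAlgebra.of 𝔽 (Sum.inl Y))
        (List.ofFn fun i => FreeLieAlgebra.of 𝔽 (Sum.inr (i, kk i)))) ∈
        LieModule.lowerCentralSeries 𝔽 L L (c - 1) := by
    intro Y kk
    have h := leftBracket_mem_lcs (R := 𝔽)
      (List.ofFn fun i : Fin (c-1) => FreeLieAlgebra.of 𝔽 (Sum.inr (i, kk i))) 0
      (FreeLieAlgebra.of 𝔽 (Sum.inl Y))
      (by rw [LieModule.lowerCentralSeries_zero]; exact LieSubmodule.mem_top _)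
    simpa using h
  constructor
  · -- the ideal property: brackets with elements of `I` vanish
    intro y z hz
    obtain ⟨w, rfl⟩ := LieSubmodule.Quotient.surjective_mk' N y
    have hz0 : ⁅LieSubmodule.Quotient.mk' N w, z⁆ = 0 := by
      rw [hI] at hz
      refine Submodule.span_induction
        (p := fun z _ => ⁅LieSubmodule.Quotient.mk' N w, z⁆ = 0)
        ?_ ?_ ?_ ?_ hz
      · rintro z ⟨Y, kk, hk, rfl⟩
        rw [hmk Y kk, LieSubmodule.Quotient.mk'_apply, ← LieSubmodule.Quotient.mk_bracket,
          LieSubmodule.Quotient.mk_eq_zero', hNdef, lcs_succ_of_pos c (by omega)]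
        exact LieSubmodule.lie_mem_lie (LieSubmodule.mem_top w) (hu_mem Y kk)
      · exact lie_zero ((LieSubmodule.Quotient.mk' N) w)
      · intro a b _ _ h1 h2
        exact (lie_add ((LieSubmodule.Quotient.mk' N) w) a b).trans (by rw [h1, h2, add_zero])
      · intro t a _ h1
        exact (lie_smul t ((LieSubmodule.Quotient.mk' N) w) a).trans (by rw [h1, smul_zero])
    exact hz0 ▸ I.zero_mem
  · intro X jj
    constructor
    · -- if `jj ∉ X`, separate `e X jj` from `I` with a homomorphism to matrices
      intro hmem
      by_contra hX
      set Φ := φX 𝔽 c hc X jj with hΦdef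
      have hker : N.toSubmodule ≤ LinearMap.ker Φ.toLinearMap := by
        intro x hx
        rw [LinearMap.mem_ker]
        exact Smod_eq_zero (lcs_map_mem Φ (φX_mem 𝔽 c hc X jj) c x hx)
      let ψ : FreeNilpotentLieAlgebra 𝔽 c (GenIdx c) →ₗ[𝔽] Matrix (Fin (c+1)) (Fin (c+1)) 𝔽 :=
        Submodule.liftQ _ Φ.toLinearMap hker
      have hψmk : ∀ x : L, ψ (LieSubmodule.Quotient.mk (N := N) x) = Φ x := fun _ => rfl
      have key : ∀ (Y : Set (Fin (c-1) → ℕ)) (kk : Fin (c-1) → ℕ),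
          ψ (e Y kk) = leftBracket
            ((genMat 𝔽 c hc X jj (Sum.inl Y) : Matrix (Fin (c+1)) (Fin (c+1)) 𝔽))
            (List.ofFn fun i : Fin (c-1) =>
              (genMat 𝔽 c hc X jj (Sum.inr (i, kk i)) : Matrix (Fin (c+1)) (Fin (c+1)) 𝔽)) := by
        intro Y kk
        rw [hmk Y kk, hψmk,
          map_leftBracket (⇑Φ) (fun a b => Φ.map_lie a b) _ _, List.map_ofFn]
        simp only [Function.comp_def, hΦdef, φX_of]
      have hIker : I ≤ LinearMap.ker ψ := by
        rw [hI, Submodule.span_le]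
        rintro z ⟨Y, kk, hk, rfl⟩
        rw [SetLike.mem_coe, LinearMap.mem_ker, key]
        by_cases hYX : Y = X
        · have hkX : kk ∈ X := hYX ▸ hk
          have hkjj : kk ≠ jj := fun h => hX (h ▸ hkX)
          obtain ⟨i0, hi0⟩ := Function.ne_iff.mp hkjj
          apply leftBracket_of_zero_mem
          exact List.mem_ofFn.mpr ⟨i0, genMat_inr_ne hc X jj hi0⟩
        · rw [genMat_inl_ne hc jj hYX, leftBracket_zero]
      have h1 : ψ (e X jj) = 0 := LinearMap.mem_ker.mp (hIker hmem)
      rw [key] at h1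
      simp only [genMat_inl_self hc X jj, genMat_inr_self hc X jj] at h1
      have halign : (fun i : Fin (c-1) => Ee 𝔽 c ((i : ℕ) + 1) ((i : ℕ) + 2)) =
          fun i : Fin (c-1) => Ee 𝔽 c (1 + (i : ℕ)) (1 + (i : ℕ) + 1) := by
        funext i
        rw [show (i : ℕ) + 1 = 1 + (i : ℕ) from by omega,
          show (i : ℕ) + 2 = 1 + (i : ℕ) + 1 from by omega]
      rw [halign, Ee_chain (c-1) 1 le_rfl (by omega),
        show 1 + (c - 1) = c from by omega] at h1
      have h2 := Matrix.ext_iff.mpr h1 ((0 : ℕ) : Fin (c+1)) ((c : ℕ) : Fin (c+1))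
      rw [Matrix.zero_apply] at h2
      have h3 : (1 : 𝔽) = 0 := by simpa [Ee] using h2
      exact one_ne_zero h3
    · intro hjj
      rw [hI]
      exact Submodule.subset_span ⟨X, jj, hjj, rfl⟩
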